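/- Suppose d1, d2, l > 0, A0, B0 ∈ ℝ with A0 + B0 < 0, n ∈ ℕ with n ≥ 1, and r_n^T > A0. Then λ = 0 is a simple root of the quadratic G_n(·, r_n^T, 0): its constant term d2*x_n*(d1*x_n − A0) + r_n^T*(d1*x_n − A0 − B0) vanishes while its linear coefficient satisfies ∂G_n/∂λ(0, r_n^T, 0) = r_n^T + (d1 + d2)*x_n − A0 > 0; moreover the derivative in r of the constant term, ∂/∂r[G_n(0, r, 0)] = d1*x_n − A0 − B0, is strictly positive (the transversality condition for the Turing bifurcation at τ = 0). -/

import Mathlib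

/-- If `d1, d2, l > 0`, `A0 + B0 < 0`, `n ≥ 1` and `r_n^T > A0`, then
`λ = 0` is a simple root of the quadratic `G_n(·, r_n^T, 0)`: the constant term
vanishes, the linear coefficient `∂G_n/∂λ(0, r_n^T, 0) = r_n^T + (d1+d2)x_n − A0`
is positive, and `∂/∂r[G_n(0, r, 0)] = d1*x_n − A0 − B0 > 0` (transversality). -/
theorem holling_tanner_turing_simple_zero
    (d1 d2 l A0 B0 : ℝ) (n : ℕ) (hd1 : 0 < d1) (hd2 : 0 < d2) (hl : 0 < l)
    (hAB : A0 + B0 < 0) (hn : 1 ≤ n)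
    (xn : ℝ) (hxn : xn = (n:ℝ)^2 / l^2)
    (rT : ℝ) (hrT : rT = -(d2 * xn * (d1 * xn - A0)) / (d1 * xn - A0 - B0))
    (hrTA : A0 < rT)
    (G : ℂ → ℂ)
    (hG : G = fun lam => lam^2 - (((A0 - (d1 + d2) * xn - rT : ℝ)) : ℂ) * lam
        + (((d2 * xn * (d1 * xn - A0) + rT * (d1 * xn - A0 - B0) : ℝ)) : ℂ)) :
    (d2 * xn * (d1 * xn - A0) + rT * (d1 * xn - A0 - B0) = 0) ∧
    G 0 = 0 ∧
    deriv G 0 = (((rT + (d1 + d2) * xn - A0 : ℝ)) : ℂ) ∧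
    0 < rT + (d1 + d2) * xn - A0 ∧
    deriv (fun r : ℝ => d2 * xn * (d1 * xn - A0) + r * (d1 * xn - A0 - B0)) rT
      = d1 * xn - A0 - B0 ∧
    0 < d1 * xn - A0 - B0 := by
  have hxnpos : 0 < xn := by
    rw [hxn]
    have hn' : (0:ℝ) < (n:ℝ) := by exact_mod_cast Nat.pos_of_ne_zero (by omega)
    positivity
  have hpos : 0 < d1 * xn - A0 - B0 := by nlinarith
  have hconst : d2 * xn * (d1 * xn - A0) + rT * (d1 * xn - A0 - B0) = 0 := by
    rw [hrT, div_mul_cancel₀ _ hpos.ne']; ring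
  refine ⟨hconst, ?_, ?_, by nlinarith, ?_, hpos⟩
  · simp [hG, hconst]
  · have : deriv G 0 = 2 * 0 - (((A0 - (d1 + d2) * xn - rT : ℝ)) : ℂ) := by
      rw [hG]
      have h1 : HasDerivAt (fun lam : ℂ => lam^2 - (((A0 - (d1 + d2) * xn - rT : ℝ)) : ℂ) * lam
          + (((d2 * xn * (d1 * xn - A0) + rT * (d1 * xn - A0 - B0) : ℝ)) : ℂ))
          (2 * 0 - (((A0 - (d1 + d2) * xn - rT : ℝ)) : ℂ)) 0 := by
        have := (((hasDerivAt_pow 2 (0:ℂ)).sub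
          ((hasDerivAt_id (0:ℂ)).const_mul (((A0 - (d1 + d2) * xn - rT : ℝ)) : ℂ))).add_const
          (((d2 * xn * (d1 * xn - A0) + rT * (d1 * xn - A0 - B0) : ℝ)) : ℂ))
        simpa using this
      exact h1.deriv
    rw [this]
    push_cast
    ring
  · have h1 : HasDerivAt (fun r : ℝ => d2 * xn * (d1 * xn - A0) + r * (d1 * xn - A0 - B0))
        (d1 * xn - A0 - B0) rT := by
      simpa using ((hasDerivAt_id rT).mul_const (d1 * xn - A0 - B0)).const_add
        (d2 * xn * (d1 * xn - A0))
    exact h1.deriv
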